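/- If x* satisfies the single-virus SIS fixed point equations for (A, τ), where A is the adjacency matrix of a connected undirected graph on N ≥ 1 vertices and τ > 0, then by the Collatz–Wielandt formula λ(A) ≤ max_{i} [A x*]_i / x*_i = 1/(τ(1 − max_i x*_i)). -/

import Mathlib

open Matrix Finset

/-- Spectral radius of a real matrix: supremum of absolute values of its complex eigenvalues. -/
noncomputable def specRad {N : ℕ} (M : Matrix (Fin N) (Fin N) ℝ) : ℝ :=
  sSup ((fun z => ‖z‖) '' spectrum ℂ (M.map Complex.ofReal))

/-- `A` is the adjacency matrix of a connected undirected graph: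
symmetric, 0/1 entries, zero diagonal, and irreducible (connectivity). -/
def IsConnectedAdjMatrix {N : ℕ} (A : Matrix (Fin N) (Fin N) ℝ) : Prop :=
  A.IsSymm ∧ (∀ i j, A i j = 0 ∨ A i j = 1) ∧ (∀ i, A i i = 0) ∧
    (∀ i j, i ≠ j → ∃ k : ℕ, 0 < (A ^ k) i j)

/-- `x` satisfies the single-virus SIS fixed point equations for `(A, τ)`. -/
def IsSISFixedPoint {N : ℕ} (A : Matrix (Fin N) (Fin N) ℝ) (τ : ℝ)
    (x : Fin N → ℝ) : Prop :=
  (∀ i, 0 < x i ∧ x i < 1) ∧ (∀ i, ∑ j, A i j * x j = x i / (τ * (1 - x i)))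

/-- If `x*` satisfies the single-virus SIS fixed point equations for `(A, τ)`,
where `A` is the adjacency matrix of a connected undirected graph on `N ≥ 1` vertices and
`τ > 0`, then by the Collatz–Wielandt formula
`λ(A) ≤ max_i [A x*]_i / x*_i = 1/(τ(1 − max_i x*_i))`. -/
theorem collatz_wielandt_bound {N : ℕ} (hN : 1 ≤ N)
    (A : Matrix (Fin N) (Fin N) ℝ) (hA : IsConnectedAdjMatrix A)
    (τ : ℝ) (hτ : 0 < τ)
    (xstar : Fin N → ℝ) (hx : IsSISFixedPoint A τ xstar) :
    specRad A ≤
      Finset.univ.sup' ⟨⟨0, hN⟩, Finset.mem_univ _⟩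
        (fun i => (∑ j, A i j * xstar j) / xstar i) ∧
    Finset.univ.sup' ⟨⟨0, hN⟩, Finset.mem_univ _⟩
        (fun i => (∑ j, A i j * xstar j) / xstar i) =
      1 / (τ * (1 - Finset.univ.sup' ⟨⟨0, hN⟩, Finset.mem_univ _⟩ xstar)) := by
  obtain ⟨-, hA01, -, -⟩ := hA
  obtain ⟨hx01, hxeq⟩ := hx
  rw [specRad]
  have hne : (Finset.univ : Finset (Fin N)).Nonempty := ⟨⟨0, hN⟩, Finset.mem_univ _⟩
  have hApos : ∀ i j, 0 ≤ A i j := fun i j => by rcases hA01 i j with h | h <;> simp [h]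
  have hden : ∀ i, 0 < τ * (1 - xstar i) := fun i => mul_pos hτ (by linarith [(hx01 i).2])
  set f : Fin N → ℝ := fun i => (∑ j, A i j * xstar j) / xstar i with hf_def
  have hf : ∀ i, f i = 1 / (τ * (1 - xstar i)) := by
    intro i
    have hxi := (hx01 i).1
    simp only [hf_def, hxeq i]
    rw [div_div, mul_comm (τ * (1 - xstar i)) (xstar i), ← div_div, div_self hxi.ne']
  obtain ⟨i0, -, hi0⟩ := Finset.exists_mem_eq_sup' hne xstar
  have hmax : ∀ i, xstar i ≤ xstar i0 := fun i => hi0 ▸ Finset.le_sup' xstar (mem_univ i)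
  have hsup_eq : Finset.univ.sup' hne f = 1 / (τ * (1 - xstar i0)) := by
    apply le_antisymm
    · apply Finset.sup'_le
      intro i _
      rw [hf i]
      exact one_div_le_one_div_of_le (hden i0)
        (mul_le_mul_of_nonneg_left (by linarith [hmax i]) hτ.le)
    · rw [← hf i0]; exact Finset.le_sup' f (mem_univ i0)
  set s : ℝ := Finset.univ.sup' hne f with hs_def
  have hs_pos : 0 < s := by rw [hsup_eq]; exact one_div_pos.2 (hden i0)
  constructor
  · apply Real.sSup_le _ hs_pos.le
    rintro z ⟨μ, hμ, rfl⟩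
    rw [spectrum.mem_iff] at hμ
    have hdet : ((algebraMap ℂ (Matrix (Fin N) (Fin N) ℂ)) μ - A.map Complex.ofReal).det = 0 := by
      by_contra h
      exact hμ ((Matrix.isUnit_iff_isUnit_det _).2 (isUnit_iff_ne_zero.2 h))
    obtain ⟨v, hv0, hvEq⟩ := (Matrix.exists_mulVec_eq_zero_iff).2 hdet
    have hev : ∀ i, ∑ j, (A i j : ℂ) * v j = μ * v i := by
      intro i
      have h := congrFun hvEq i
      simp only [Matrix.sub_mulVec, Pi.sub_apply, Pi.zero_apply, sub_eq_zero] at h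
      have h1 : ((algebraMap ℂ (Matrix (Fin N) (Fin N) ℂ)) μ).mulVec v i = μ * v i := by
        simp [Matrix.mulVec, dotProduct, Matrix.algebraMap_matrix_apply, ite_mul,
          Finset.sum_ite_eq]
      have h2 : ((A.map Complex.ofReal).mulVec v) i = ∑ j, (A i j : ℂ) * v j := by
        simp [Matrix.mulVec, dotProduct, Matrix.map_apply]
      rw [h1, h2] at h
      exact h.symm
    -- argmax of |v i| / xstar i
    set g : Fin N → ℝ := fun i => ‖v i‖ / xstar i with hg_def
    obtain ⟨i1, -, hi1⟩ := Finset.exists_mem_eq_sup' hne g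
    set r : ℝ := Finset.univ.sup' hne g with hr_def
    have hvle : ∀ i, ‖v i‖ ≤ r * xstar i := by
      intro i
      have : g i ≤ r := Finset.le_sup' g (mem_univ i)
      rw [hg_def] at this
      exact (div_le_iff₀ (hx01 i).1).1 this
    have hrx : ‖v i1‖ = r * xstar i1 := by
      rw [hi1, hg_def]
      exact (div_mul_cancel₀ _ (hx01 i1).1.ne').symm
    have hr_pos : 0 < r := by
      obtain ⟨k, hk⟩ := Function.ne_iff.1 hv0
      have : 0 < g k := div_pos (by simpa using hk) (hx01 k).1
      exact lt_of_lt_of_le this (Finset.le_sup' g (mem_univ k))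
    have key : ‖μ‖ * (r * xstar i1) ≤ s * (r * xstar i1) := by
      have h1 : ‖μ * v i1‖ ≤ ∑ j, A i1 j * ‖v j‖ := by
        rw [← hev i1]
        calc ‖∑ j, (A i1 j : ℂ) * v j‖
            ≤ ∑ j, ‖(A i1 j : ℂ) * v j‖ := by
              simpa using norm_sum_le Finset.univ (fun j => (A i1 j : ℂ) * v j)
          _ = ∑ j, A i1 j * ‖v j‖ := by
              apply Finset.sum_congr rfl
              intro j _
              rw [norm_mul, Complex.norm_real, Real.norm_eq_abs, abs_of_nonneg (hApos i1 j)]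
      have h2 : ∑ j, A i1 j * ‖v j‖ ≤ r * ∑ j, A i1 j * xstar j := by
        rw [Finset.mul_sum]
        apply Finset.sum_le_sum
        intro j _
        have := hvle j
        calc A i1 j * ‖v j‖ ≤ A i1 j * (r * xstar j) :=
              mul_le_mul_of_nonneg_left this (hApos i1 j)
          _ = r * (A i1 j * xstar j) := by ring
      have h3 : ∑ j, A i1 j * xstar j ≤ s * xstar i1 := by
        have : f i1 ≤ s := Finset.le_sup' f (mem_univ i1)
        rw [hf_def] at this
        exact (div_le_iff₀ (hx01 i1).1).1 this
      calc ‖μ‖ * (r * xstar i1) = ‖μ * v i1‖ := by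
            rw [norm_mul, hrx]
        _ ≤ ∑ j, A i1 j * ‖v j‖ := h1
        _ ≤ r * ∑ j, A i1 j * xstar j := h2
        _ ≤ r * (s * xstar i1) := mul_le_mul_of_nonneg_left h3 hr_pos.le
        _ = s * (r * xstar i1) := by ring
    exact le_of_mul_le_mul_right key (mul_pos hr_pos (hx01 i1).1)
  · rw [show (Finset.univ.sup' ⟨⟨0, hN⟩, Finset.mem_univ _⟩ xstar) = xstar i0 from hi0]
    exact hsup_eq
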